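/- arXiv:2111.01249 — 3 statements merged into one kernel-verified Lean document; each statement's English description precedes it below -/
import Mathlib

section
/- Aggregated balance constraints are implied by the nodal balances: if an allocation (s,d,f,ξ,y) satisfies the nodal balance constraint for every node n and product p, then for every partition c₀ ∈ 𝒞 and product p ∈ 𝒫 the aggregated balance holds: Σ_{i : c(n(i))=c₀, p(i)=p} sᵢ + Σ_{k : c_r(k)=c₀, p(k)=p} f̂_k − Σ_{j : c(n(j))=c₀, p(j)=p} dⱼ − Σ_{k : c_s(k)=c₀, p(k)=p} f̂_k + Σ_{t : c(n(t))=c₀} γ_{t,p}·ξ_t = 0, where f̂_k = Σ_{ℓ ∈ class k} f_ℓ. -/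
open Finset

/-- A multi-product supply chain model with nodes `N`, products `P`,
suppliers `S`, consumers `D`, transport edges `L`, and technologies `T`. -/
structure SupplyChain (N P S D L T : Type) where
  /-- node of supplier `i` -/
  nS : S → N
  /-- product of supplier `i` -/
  pS : S → P
  /-- supply capacity `s̄ᵢ` -/
  sBar : S → ℝ
  /-- supply cost `αˢᵢ` -/
  alphaS : S → ℝ
  /-- node of consumer `j` -/
  nD : D → N
  /-- product of consumer `j` -/
  pD : D → P
  /-- demand capacity `d̄ⱼ` -/
  dBar : D → ℝ
  /-- demand price `α^d_j` -/
  alphaD : D → ℝ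
  /-- sending node `n_s(ℓ)` -/
  nsend : L → N
  /-- receiving node `n_r(ℓ)` -/
  nrecv : L → N
  /-- product transported `p(ℓ)` -/
  pL : L → P
  /-- flow capacity `f̄_ℓ` -/
  fBar : L → ℝ
  /-- transport cost `α^f_ℓ` -/
  alphaF : L → ℝ
  /-- node of technology `t` -/
  nT : T → N
  /-- yield factors `γ_{t,p}` -/
  gamma : T → P → ℝ
  /-- per-facility processing capacity `ξ̄_t` -/
  xiBar : T → ℝ
  /-- maximum number of facilities `ȳ_t` -/
  yBar : T → ℕ
  /-- operating cost `α^ξ_t` -/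
  alphaXi : T → ℝ
  /-- installation cost `α^y_t` -/
  alphaY : T → ℝ
  sBar_nonneg : ∀ i, 0 ≤ sBar i
  alphaS_nonneg : ∀ i, 0 ≤ alphaS i
  dBar_nonneg : ∀ j, 0 ≤ dBar j
  alphaD_nonneg : ∀ j, 0 ≤ alphaD j
  fBar_nonneg : ∀ l, 0 ≤ fBar l
  alphaF_nonneg : ∀ l, 0 ≤ alphaF l
  xiBar_nonneg : ∀ t, 0 ≤ xiBar t
  alphaXi_nonneg : ∀ t, 0 ≤ alphaXi t
  alphaY_nonneg : ∀ t, 0 ≤ alphaY t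

/-- An allocation `x = (s, d, f, ξ, y)`. -/
abbrev Alloc (S D L T : Type) : Type :=
  (S → ℝ) × (D → ℝ) × (L → ℝ) × (T → ℝ) × (T → ℤ)

variable {N P S D L T : Type} [Fintype N] [Fintype P] [Fintype S] [Fintype D]
  [Fintype L] [Fintype T] [DecidableEq N] [DecidableEq P]

/-- The feasible set `𝓕` of the supply chain model. -/
def Feasible (sc : SupplyChain N P S D L T) : Set (Alloc S D L T) :=
  { x | (∀ (n : N) (p : P),
        (∑ i ∈ univ.filter (fun i => sc.nS i = n ∧ sc.pS i = p), x.1 i)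
        + (∑ l ∈ univ.filter (fun l => sc.nrecv l = n ∧ sc.pL l = p), x.2.2.1 l)
        - (∑ j ∈ univ.filter (fun j => sc.nD j = n ∧ sc.pD j = p), x.2.1 j)
        - (∑ l ∈ univ.filter (fun l => sc.nsend l = n ∧ sc.pL l = p), x.2.2.1 l)
        + (∑ t ∈ univ.filter (fun t => sc.nT t = n), sc.gamma t p * x.2.2.2.1 t) = 0)
      ∧ (∀ j, 0 ≤ x.2.1 j ∧ x.2.1 j ≤ sc.dBar j)
      ∧ (∀ i, 0 ≤ x.1 i ∧ x.1 i ≤ sc.sBar i)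
      ∧ (∀ l, 0 ≤ x.2.2.1 l ∧ x.2.2.1 l ≤ sc.fBar l)
      ∧ (∀ t, 0 ≤ x.2.2.2.2 t ∧ x.2.2.2.2 t ≤ (sc.yBar t : ℤ))
      ∧ (∀ t, 0 ≤ x.2.2.2.1 t ∧ x.2.2.2.1 t ≤ (x.2.2.2.2 t : ℝ) * sc.xiBar t) }

/-- The total welfare `φ(x)`. -/
def welfare (sc : SupplyChain N P S D L T) (x : Alloc S D L T) : ℝ :=
  (∑ j, sc.alphaD j * x.2.1 j) - (∑ i, sc.alphaS i * x.1 i)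
    - (∑ l, sc.alphaF l * x.2.2.1 l) - (∑ t, sc.alphaXi t * x.2.2.2.1 t)
    - (∑ t, sc.alphaY t * (x.2.2.2.2 t : ℝ))

/-- The optimal welfare `φ* = sup_{x ∈ 𝓕} φ(x)`. -/
noncomputable def phiStar (sc : SupplyChain N P S D L T) : ℝ :=
  sSup (welfare sc '' Feasible sc)

/-- The sampled feasible set `𝓕̲(ℒ_a)`. -/
def SampledFeasible (sc : SupplyChain N P S D L T) (La : Set L) : Set (Alloc S D L T) :=
  { x ∈ Feasible sc | ∀ l, l ∉ La → x.2.2.1 l = 0 }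

/-- The sampled optimal welfare `φ̲*(ℒ_a)`. -/
noncomputable def phiLower (sc : SupplyChain N P S D L T) (La : Set L) : ℝ :=
  sSup (welfare sc '' SampledFeasible sc La)

/-- Graph-coarsening data: a partition map `c : 𝒩 → 𝒞` on nodes together with a
grouping of the global edges into classes indexed by `𝒦`. An edge `ℓ` is local if
`c(n_s(ℓ)) = c(n_r(ℓ))` and global otherwise; each class `k ∈ 𝒦` has a sending
partition `cs k`, a receiving partition `cr k` with `cs k ≠ cr k`, and a product
`pK k`, and consists of all global edges `ℓ` with `c(n_s(ℓ)) = cs k`,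
`c(n_r(ℓ)) = cr k` and `p(ℓ) = pK k`; every global edge lies in exactly one class. -/
structure Coarsening (sc : SupplyChain N P S D L T) (C K : Type) where
  /-- the partition map `c : 𝒩 → 𝒞` -/
  part : N → C
  /-- the sending partition `c_s(k)` of class `k` -/
  cs : K → C
  /-- the receiving partition `c_r(k)` of class `k` -/
  cr : K → C
  /-- the product `p(k)` of class `k` -/
  pK : K → P
  cs_ne_cr : ∀ k, cs k ≠ cr k
  unique_class : ∀ l : L, part (sc.nsend l) ≠ part (sc.nrecv l) →
    ∃! k : K, cs k = part (sc.nsend l) ∧ cr k = part (sc.nrecv l) ∧ pK k = sc.pL l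

variable {C K : Type} [Fintype K] [DecidableEq C]

/-- The set of edges in global-edge class `k`. -/
def classSet (sc : SupplyChain N P S D L T) (co : Coarsening sc C K) (k : K) : Finset L :=
  univ.filter (fun l =>
    co.part (sc.nsend l) = co.cs k ∧ co.part (sc.nrecv l) = co.cr k ∧ sc.pL l = co.pK k)

/-- The aggregated flow `f̂_k = Σ_{ℓ ∈ class k} f_ℓ`. -/
def aggFlow (sc : SupplyChain N P S D L T) (co : Coarsening sc C K) (f : L → ℝ) (k : K) : ℝ :=
  ∑ l ∈ classSet sc co k, f l

/-- The aggregated capacity `f̄̂_k = Σ_{ℓ ∈ class k} f̄_ℓ`. -/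
def aggCap (sc : SupplyChain N P S D L T) (co : Coarsening sc C K) (k : K) : ℝ :=
  ∑ l ∈ classSet sc co k, sc.fBar l

/-- The aggregated cost `α̂_k = min_{ℓ ∈ class k} α^f_ℓ` (as an infimum; for a
nonempty class this is the minimum transport cost over the class). -/
noncomputable def aggCost (sc : SupplyChain N P S D L T) (co : Coarsening sc C K) (k : K) : ℝ :=
  sInf (sc.alphaF '' (classSet sc co k : Set L))

/-- A coarse allocation `(s, d, g, ξ, y)` with one flow per global-edge class. -/
abbrev CoarseAlloc (S D K T : Type) : Type :=
  (S → ℝ) × (D → ℝ) × (K → ℝ) × (T → ℝ) × (T → ℤ)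

/-- The coarse feasible set `𝓕̄`. -/
def CoarseFeasible (sc : SupplyChain N P S D L T) (co : Coarsening sc C K) :
    Set (CoarseAlloc S D K T) :=
  { x | (∀ (c₀ : C) (p : P),
        (∑ i ∈ univ.filter (fun i => co.part (sc.nS i) = c₀ ∧ sc.pS i = p), x.1 i)
        + (∑ k ∈ univ.filter (fun k => co.cr k = c₀ ∧ co.pK k = p), x.2.2.1 k)
        - (∑ j ∈ univ.filter (fun j => co.part (sc.nD j) = c₀ ∧ sc.pD j = p), x.2.1 j)
        - (∑ k ∈ univ.filter (fun k => co.cs k = c₀ ∧ co.pK k = p), x.2.2.1 k)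
        + (∑ t ∈ univ.filter (fun t => co.part (sc.nT t) = c₀), sc.gamma t p * x.2.2.2.1 t) = 0)
      ∧ (∀ j, 0 ≤ x.2.1 j ∧ x.2.1 j ≤ sc.dBar j)
      ∧ (∀ i, 0 ≤ x.1 i ∧ x.1 i ≤ sc.sBar i)
      ∧ (∀ k, 0 ≤ x.2.2.1 k ∧ x.2.2.1 k ≤ aggCap sc co k)
      ∧ (∀ t, 0 ≤ x.2.2.2.2 t ∧ x.2.2.2.2 t ≤ (sc.yBar t : ℤ))
      ∧ (∀ t, 0 ≤ x.2.2.2.1 t ∧ x.2.2.2.1 t ≤ (x.2.2.2.2 t : ℝ) * sc.xiBar t) }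

/-- The coarse welfare `φ̄(s,d,g,ξ,y)`. -/
noncomputable def coarseWelfare (sc : SupplyChain N P S D L T) (co : Coarsening sc C K)
    (x : CoarseAlloc S D K T) : ℝ :=
  (∑ j, sc.alphaD j * x.2.1 j) - (∑ i, sc.alphaS i * x.1 i)
    - (∑ k, aggCost sc co k * x.2.2.1 k) - (∑ t, sc.alphaXi t * x.2.2.2.1 t)
    - (∑ t, sc.alphaY t * (x.2.2.2.2 t : ℝ))

/-- The coarse optimal welfare `φ̄*`. -/
noncomputable def phiUpper (sc : SupplyChain N P S D L T) (co : Coarsening sc C K) : ℝ :=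
  sSup (coarseWelfare sc co '' CoarseFeasible sc co)



variable {N P S D L T : Type} [Fintype N] [Fintype P] [Fintype S] [Fintype D]
  [Fintype L] [Fintype T] [DecidableEq N] [DecidableEq P]
variable {C K : Type} [Fintype K] [DecidableEq C]

/-- Summing fibers over nodes in a partition. -/
lemma fiber_sum_aux {A : Type} [Fintype A] (nA : A → N) (q : A → Prop) [DecidablePred q]
    (w : A → ℝ) (part : N → C) (c₀ : C) :
    ∑ n ∈ univ.filter (fun n => part n = c₀),
        ∑ a ∈ univ.filter (fun a => nA a = n ∧ q a), w a
      = ∑ a ∈ univ.filter (fun a => part (nA a) = c₀ ∧ q a), w a := by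
  have h1 : ∀ n : N, (univ.filter (fun a => nA a = n ∧ q a))
      = (univ.filter q).filter (fun a => nA a = n) := by
    intro n; rw [filter_filter]; apply filter_congr; intro a _; tauto
  calc ∑ n ∈ univ.filter (fun n => part n = c₀),
        ∑ a ∈ univ.filter (fun a => nA a = n ∧ q a), w a
      = ∑ n ∈ univ.filter (fun n => part n = c₀),
        ∑ a ∈ (univ.filter q).filter (fun a => nA a = n), w a := by
        exact Finset.sum_congr rfl (fun n _ => by rw [h1 n])
    _ = ∑ a ∈ (univ.filter q).filter (fun a => nA a ∈ univ.filter (fun n => part n = c₀)), w a :=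
        Finset.sum_fiberwise_eq_sum_filter _ _ _ _
    _ = ∑ a ∈ univ.filter (fun a => part (nA a) = c₀ ∧ q a), w a := by
        rw [filter_filter]; apply Finset.sum_congr _ (fun _ _ => rfl)
        apply filter_congr; intro a _; simp; tauto

lemma classSet_disjoint (sc : SupplyChain N P S D L T) (co : Coarsening sc C K) :
    (Set.univ : Set K).PairwiseDisjoint (classSet sc co) := by
  intro k₁ _ k₂ _ hne
  simp only [Function.onFun, Finset.disjoint_left]
  intro l h1 h2
  simp only [classSet, mem_filter, mem_univ, true_and] at h1 h2
  have hglob : co.part (sc.nsend l) ≠ co.part (sc.nrecv l) := by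
    rw [h1.1, h1.2.1]; exact co.cs_ne_cr k₁
  obtain ⟨k, -, huniq⟩ := co.unique_class l hglob
  exact hne (by rw [huniq k₁ ⟨h1.1.symm, h1.2.1.symm, h1.2.2.symm⟩,
    huniq k₂ ⟨h2.1.symm, h2.2.1.symm, h2.2.2.symm⟩])

lemma aggFlow_sum_recv (sc : SupplyChain N P S D L T) (co : Coarsening sc C K)
    (f : L → ℝ) (c₀ : C) (p : P) :
    ∑ k ∈ univ.filter (fun k => co.cr k = c₀ ∧ co.pK k = p), aggFlow sc co f k
      = ∑ l ∈ univ.filter (fun l => (co.part (sc.nrecv l) = c₀ ∧ sc.pL l = p)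
          ∧ co.part (sc.nsend l) ≠ co.part (sc.nrecv l)), f l := by
  classical
  have hU : (univ.filter (fun k => co.cr k = c₀ ∧ co.pK k = p)).biUnion (classSet sc co)
      = univ.filter (fun l => (co.part (sc.nrecv l) = c₀ ∧ sc.pL l = p)
          ∧ co.part (sc.nsend l) ≠ co.part (sc.nrecv l)) := by
    ext l
    simp only [mem_biUnion, mem_filter, mem_univ, true_and, classSet]
    constructor
    · rintro ⟨k, ⟨hcr, hpk⟩, hs, hr, hp⟩
      refine ⟨⟨by rw [hr, hcr], by rw [hp, hpk]⟩, ?_⟩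
      rw [hs, hr]; exact co.cs_ne_cr k
    · rintro ⟨⟨hr, hp⟩, hglob⟩
      obtain ⟨k, ⟨hk1, hk2, hk3⟩, -⟩ := co.unique_class l hglob
      exact ⟨k, ⟨hk2.trans hr, hk3.trans hp⟩, hk1.symm, hk2.symm, hk3.symm⟩
  rw [← hU, Finset.sum_biUnion ((classSet_disjoint sc co).subset (Set.subset_univ _))]
  rfl

lemma aggFlow_sum_send (sc : SupplyChain N P S D L T) (co : Coarsening sc C K)
    (f : L → ℝ) (c₀ : C) (p : P) :
    ∑ k ∈ univ.filter (fun k => co.cs k = c₀ ∧ co.pK k = p), aggFlow sc co f k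
      = ∑ l ∈ univ.filter (fun l => (co.part (sc.nsend l) = c₀ ∧ sc.pL l = p)
          ∧ co.part (sc.nsend l) ≠ co.part (sc.nrecv l)), f l := by
  classical
  have hU : (univ.filter (fun k => co.cs k = c₀ ∧ co.pK k = p)).biUnion (classSet sc co)
      = univ.filter (fun l => (co.part (sc.nsend l) = c₀ ∧ sc.pL l = p)
          ∧ co.part (sc.nsend l) ≠ co.part (sc.nrecv l)) := by
    ext l
    simp only [mem_biUnion, mem_filter, mem_univ, true_and, classSet]
    constructor
    · rintro ⟨k, ⟨hcs, hpk⟩, hs, hr, hp⟩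
      refine ⟨⟨by rw [hs, hcs], by rw [hp, hpk]⟩, ?_⟩
      rw [hs, hr]; exact co.cs_ne_cr k
    · rintro ⟨⟨hs, hp⟩, hglob⟩
      obtain ⟨k, ⟨hk1, hk2, hk3⟩, -⟩ := co.unique_class l hglob
      exact ⟨k, ⟨hk1.trans hs, hk3.trans hp⟩, hk1.symm, hk2.symm, hk3.symm⟩
  rw [← hU, Finset.sum_biUnion ((classSet_disjoint sc co).subset (Set.subset_univ _))]
  rfl


/-- Aggregated balance constraints are implied by the nodal balances:
if an allocation `(s,d,f,ξ,y)` satisfies the nodal balance at every node and product,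
then for every partition `c₀` and product `p` the aggregated balance holds with the
aggregated flows `f̂_k = Σ_{ℓ ∈ class k} f_ℓ`. -/
theorem aggregated_balance_of_nodal_balance (sc : SupplyChain N P S D L T)
    (co : Coarsening sc C K)
    (s : S → ℝ) (d : D → ℝ) (f : L → ℝ) (xi : T → ℝ) (y : T → ℤ)
    (hbal : ∀ (n : N) (p : P),
      (∑ i ∈ univ.filter (fun i => sc.nS i = n ∧ sc.pS i = p), s i)
      + (∑ l ∈ univ.filter (fun l => sc.nrecv l = n ∧ sc.pL l = p), f l)
      - (∑ j ∈ univ.filter (fun j => sc.nD j = n ∧ sc.pD j = p), d j)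
      - (∑ l ∈ univ.filter (fun l => sc.nsend l = n ∧ sc.pL l = p), f l)
      + (∑ t ∈ univ.filter (fun t => sc.nT t = n), sc.gamma t p * xi t) = 0) :
    ∀ (c₀ : C) (p : P),
      (∑ i ∈ univ.filter (fun i => co.part (sc.nS i) = c₀ ∧ sc.pS i = p), s i)
      + (∑ k ∈ univ.filter (fun k => co.cr k = c₀ ∧ co.pK k = p), aggFlow sc co f k)
      - (∑ j ∈ univ.filter (fun j => co.part (sc.nD j) = c₀ ∧ sc.pD j = p), d j)
      - (∑ k ∈ univ.filter (fun k => co.cs k = c₀ ∧ co.pK k = p), aggFlow sc co f k)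
      + (∑ t ∈ univ.filter (fun t => co.part (sc.nT t) = c₀), sc.gamma t p * xi t) = 0 := by
  intro c₀ p
  classical
  have H : ∑ n ∈ univ.filter (fun n => co.part n = c₀),
      ((∑ i ∈ univ.filter (fun i => sc.nS i = n ∧ sc.pS i = p), s i)
      + (∑ l ∈ univ.filter (fun l => sc.nrecv l = n ∧ sc.pL l = p), f l)
      - (∑ j ∈ univ.filter (fun j => sc.nD j = n ∧ sc.pD j = p), d j)
      - (∑ l ∈ univ.filter (fun l => sc.nsend l = n ∧ sc.pL l = p), f l)
      + (∑ t ∈ univ.filter (fun t => sc.nT t = n), sc.gamma t p * xi t)) = 0 :=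
    Finset.sum_eq_zero (fun n _ => hbal n p)
  simp only [Finset.sum_add_distrib, Finset.sum_sub_distrib] at H
  rw [fiber_sum_aux sc.nS (fun i => sc.pS i = p) s co.part c₀,
      fiber_sum_aux sc.nrecv (fun l => sc.pL l = p) f co.part c₀,
      fiber_sum_aux sc.nD (fun j => sc.pD j = p) d co.part c₀,
      fiber_sum_aux sc.nsend (fun l => sc.pL l = p) f co.part c₀] at H
  have htech : ∑ n ∈ univ.filter (fun n => co.part n = c₀),
      ∑ t ∈ univ.filter (fun t => sc.nT t = n), sc.gamma t p * xi t
      = ∑ t ∈ univ.filter (fun t => co.part (sc.nT t) = c₀), sc.gamma t p * xi t := by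
    simpa using fiber_sum_aux sc.nT (fun _ : T => True) (fun t => sc.gamma t p * xi t) co.part c₀
  rw [htech] at H
  rw [aggFlow_sum_recv sc co f c₀ p, aggFlow_sum_send sc co f c₀ p]
  have hr := Finset.sum_filter_add_sum_filter_not
    (univ.filter (fun l => co.part (sc.nrecv l) = c₀ ∧ sc.pL l = p))
    (fun l => co.part (sc.nsend l) ≠ co.part (sc.nrecv l)) f
  have hs := Finset.sum_filter_add_sum_filter_not
    (univ.filter (fun l => co.part (sc.nsend l) = c₀ ∧ sc.pL l = p))
    (fun l => co.part (sc.nsend l) ≠ co.part (sc.nrecv l)) f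
  rw [filter_filter, filter_filter] at hr hs
  have hloc : univ.filter (fun l => (co.part (sc.nrecv l) = c₀ ∧ sc.pL l = p)
        ∧ ¬ co.part (sc.nsend l) ≠ co.part (sc.nrecv l))
      = univ.filter (fun l => (co.part (sc.nsend l) = c₀ ∧ sc.pL l = p)
        ∧ ¬ co.part (sc.nsend l) ≠ co.part (sc.nrecv l)) := by
    apply filter_congr; intro l _
    constructor
    · rintro ⟨⟨h1, h2⟩, h3⟩
      rw [not_not] at h3
      exact ⟨⟨h3.trans h1, h2⟩, not_not.mpr h3⟩
    · rintro ⟨⟨h1, h2⟩, h3⟩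
      rw [not_not] at h3
      exact ⟨⟨h3.symm.trans h1, h2⟩, not_not.mpr h3⟩
  have hloc' := Finset.sum_congr hloc (fun l _ => rfl) (f := f)
  linarith [H, hr, hs, hloc']
end

section
/- Upper-bound property of graph coarsening: the coarse optimal welfare is a valid upper bound on the original optimal welfare, φ* ≤ φ̄*; equivalently, for every feasible allocation x ∈ 𝓕 of the original supply chain model, φ(x) ≤ φ̄*. -/
open Finset

variable {N P S D L T : Type} [Fintype N] [Fintype P] [Fintype S] [Fintype D]
  [Fintype L] [Fintype T] [DecidableEq N] [DecidableEq P]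

variable {C K : Type} [Fintype K] [DecidableEq C]

section AuxLemmas

variable (sc : SupplyChain N P S D L T) (co : Coarsening sc C K)

lemma my_classSet_eq {k k' : K} {l : L} (h : l ∈ classSet sc co k)
    (h' : l ∈ classSet sc co k') : k = k' := by
  simp only [classSet, Finset.mem_filter, Finset.mem_univ, true_and] at h h'
  have hg : co.part (sc.nsend l) ≠ co.part (sc.nrecv l) := by
    rw [h.1, h.2.1]; exact co.cs_ne_cr k
  obtain ⟨k₀, _, huniq⟩ := co.unique_class l hg
  rw [huniq k ⟨h.1.symm, h.2.1.symm, h.2.2.symm⟩,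
    huniq k' ⟨h'.1.symm, h'.2.1.symm, h'.2.2.symm⟩]

lemma my_fiber_sum {I : Type} [Fintype I] (part : N → C) (key : I → N)
    (pred : I → Prop) [DecidablePred pred] (c₀ : C) (f : I → ℝ) :
    ∑ n ∈ univ.filter (fun n => part n = c₀),
      ∑ i ∈ univ.filter (fun i => key i = n ∧ pred i), f i
    = ∑ i ∈ univ.filter (fun i => part (key i) = c₀ ∧ pred i), f i := by
  classical
  rw [← Finset.sum_biUnion (fun n _ n' _ hnn' => Finset.disjoint_left.2
      fun i hi hi' => hnn' (by
        simp only [Finset.mem_filter] at hi hi'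
        exact hi.2.1.symm.trans hi'.2.1))]
  congr 1
  ext i
  simp only [Finset.mem_biUnion, Finset.mem_filter, Finset.mem_univ, true_and]
  constructor
  · rintro ⟨n, h1, h2, h3⟩; exact ⟨h2 ▸ h1, h3⟩
  · rintro ⟨h1, h2⟩; exact ⟨key i, h1, rfl, h2⟩

lemma my_sum_agg_recv (f : L → ℝ) (c₀ : C) (p : P) :
    ∑ k ∈ univ.filter (fun k => co.cr k = c₀ ∧ co.pK k = p), aggFlow sc co f k
    = ∑ l ∈ univ.filter (fun l => co.part (sc.nsend l) ≠ co.part (sc.nrecv l)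
        ∧ co.part (sc.nrecv l) = c₀ ∧ sc.pL l = p), f l := by
  classical
  simp only [aggFlow]
  rw [← Finset.sum_biUnion (fun k _ k' _ hkk' => Finset.disjoint_left.2
      fun l hl hl' => hkk' (my_classSet_eq sc co hl hl'))]
  congr 1
  ext l
  simp only [Finset.mem_biUnion, Finset.mem_filter, Finset.mem_univ, true_and, classSet]
  constructor
  · rintro ⟨k, ⟨hcr, hpk⟩, hs, hr, hp⟩
    refine ⟨?_, hr.trans hcr, hp.trans hpk⟩
    rw [hs, hr]; exact co.cs_ne_cr k
  · rintro ⟨hg, hr, hp⟩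
    obtain ⟨k, ⟨h1, h2, h3⟩, _⟩ := co.unique_class l hg
    exact ⟨k, ⟨h2 ▸ hr, h3 ▸ hp⟩, h1.symm, h2.symm, h3.symm⟩

lemma my_sum_agg_send (f : L → ℝ) (c₀ : C) (p : P) :
    ∑ k ∈ univ.filter (fun k => co.cs k = c₀ ∧ co.pK k = p), aggFlow sc co f k
    = ∑ l ∈ univ.filter (fun l => co.part (sc.nsend l) ≠ co.part (sc.nrecv l)
        ∧ co.part (sc.nsend l) = c₀ ∧ sc.pL l = p), f l := by
  classical
  simp only [aggFlow]
  rw [← Finset.sum_biUnion (fun k _ k' _ hkk' => Finset.disjoint_left.2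
      fun l hl hl' => hkk' (my_classSet_eq sc co hl hl'))]
  congr 1
  ext l
  simp only [Finset.mem_biUnion, Finset.mem_filter, Finset.mem_univ, true_and, classSet]
  constructor
  · rintro ⟨k, ⟨hcs, hpk⟩, hs, hr, hp⟩
    refine ⟨?_, hs.trans hcs, hp.trans hpk⟩
    rw [hs, hr]; exact co.cs_ne_cr k
  · rintro ⟨hg, hs, hp⟩
    obtain ⟨k, ⟨h1, h2, h3⟩, _⟩ := co.unique_class l hg
    exact ⟨k, ⟨h1 ▸ hs, h3 ▸ hp⟩, h1.symm, h2.symm, h3.symm⟩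

lemma my_aggCost_nonneg (hne : ∀ k, (classSet sc co k).Nonempty) (k : K) :
    0 ≤ aggCost sc co k := by
  obtain ⟨l, hl⟩ := hne k
  refine le_csInf ⟨sc.alphaF l, Set.mem_image_of_mem _ (by exact_mod_cast hl)⟩ ?_
  rintro _ ⟨l', _, rfl⟩
  exact sc.alphaF_nonneg l'

lemma my_aggCost_le (k : K) {l : L} (hl : l ∈ classSet sc co k) :
    aggCost sc co k ≤ sc.alphaF l :=
  csInf_le (((classSet sc co k : Set L).toFinite.image _).bddBelow)
    (Set.mem_image_of_mem _ (by exact_mod_cast hl))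

lemma my_cost_le (f : L → ℝ) (hf : ∀ l, 0 ≤ f l) :
    ∑ k, aggCost sc co k * aggFlow sc co f k ≤ ∑ l, sc.alphaF l * f l := by
  classical
  have h1 : ∀ k : K, aggCost sc co k * aggFlow sc co f k
      ≤ ∑ l ∈ classSet sc co k, sc.alphaF l * f l := by
    intro k
    rw [aggFlow, Finset.mul_sum]
    exact Finset.sum_le_sum fun l hl =>
      mul_le_mul_of_nonneg_right (my_aggCost_le sc co k hl) (hf l)
  calc ∑ k, aggCost sc co k * aggFlow sc co f k
      ≤ ∑ k, ∑ l ∈ classSet sc co k, sc.alphaF l * f l :=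
        Finset.sum_le_sum fun k _ => h1 k
    _ = ∑ l ∈ univ.biUnion (fun k => classSet sc co k), sc.alphaF l * f l :=
        (Finset.sum_biUnion (fun k _ k' _ hkk' => Finset.disjoint_left.2
          fun l hl hl' => hkk' (my_classSet_eq sc co hl hl'))).symm
    _ ≤ ∑ l, sc.alphaF l * f l :=
        Finset.sum_le_sum_of_subset_of_nonneg (Finset.subset_univ _)
          (fun l _ _ => mul_nonneg (sc.alphaF_nonneg l) (hf l))

end AuxLemmas

/-- Upper-bound property of graph coarsening: the coarse optimal
welfare is a valid upper bound on the original optimal welfare, `φ* ≤ φ̄*`;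
equivalently, every feasible allocation `x ∈ 𝓕` satisfies `φ(x) ≤ φ̄*`. -/
theorem phiStar_le_phiUpper (sc : SupplyChain N P S D L T)
    (co : Coarsening sc C K) (hne : ∀ k, (classSet sc co k).Nonempty) :
    phiStar sc ≤ phiUpper sc co
      ∧ ∀ x ∈ Feasible sc, welfare sc x ≤ phiUpper sc co := by
  classical
  have bdd : BddAbove (coarseWelfare sc co '' CoarseFeasible sc co) := by
    refine ⟨∑ j, sc.alphaD j * sc.dBar j, ?_⟩
    rintro _ ⟨y, ⟨_, hd, hs, hg, hy, hxi⟩, rfl⟩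
    have h1 : ∑ j, sc.alphaD j * y.2.1 j ≤ ∑ j, sc.alphaD j * sc.dBar j :=
      Finset.sum_le_sum fun j _ => mul_le_mul_of_nonneg_left (hd j).2 (sc.alphaD_nonneg j)
    have h2 : 0 ≤ ∑ i, sc.alphaS i * y.1 i :=
      Finset.sum_nonneg fun i _ => mul_nonneg (sc.alphaS_nonneg i) (hs i).1
    have h3 : 0 ≤ ∑ k, aggCost sc co k * y.2.2.1 k :=
      Finset.sum_nonneg fun k _ => mul_nonneg (my_aggCost_nonneg sc co hne k) (hg k).1
    have h4 : 0 ≤ ∑ t, sc.alphaXi t * y.2.2.2.1 t :=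
      Finset.sum_nonneg fun t _ => mul_nonneg (sc.alphaXi_nonneg t) (hxi t).1
    have h5 : 0 ≤ ∑ t, sc.alphaY t * (y.2.2.2.2 t : ℝ) :=
      Finset.sum_nonneg fun t _ => mul_nonneg (sc.alphaY_nonneg t)
        (by exact_mod_cast (hy t).1)
    unfold coarseWelfare
    linarith
  have key : ∀ x ∈ Feasible sc, welfare sc x ≤ phiUpper sc co := by
    rintro ⟨s, d, f, ξ, y⟩ ⟨hbal, hd, hs, hf, hy, hxi⟩
    set g : K → ℝ := fun k => aggFlow sc co f k with hgdef
    have hmem : (s, d, g, ξ, y) ∈ CoarseFeasible sc co := by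
      refine ⟨?_, hd, hs, ?_, hy, hxi⟩
      · intro c₀ p
        have hb : ∑ n ∈ univ.filter (fun n => co.part n = c₀),
            ((∑ i ∈ univ.filter (fun i => sc.nS i = n ∧ sc.pS i = p), s i)
            + (∑ l ∈ univ.filter (fun l => sc.nrecv l = n ∧ sc.pL l = p), f l)
            - (∑ j ∈ univ.filter (fun j => sc.nD j = n ∧ sc.pD j = p), d j)
            - (∑ l ∈ univ.filter (fun l => sc.nsend l = n ∧ sc.pL l = p), f l)
            + (∑ t ∈ univ.filter (fun t => sc.nT t = n), sc.gamma t p * ξ t)) = 0 :=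
          Finset.sum_eq_zero fun n _ => hbal n p
        rw [Finset.sum_add_distrib, Finset.sum_sub_distrib, Finset.sum_sub_distrib,
          Finset.sum_add_distrib] at hb
        rw [my_fiber_sum co.part sc.nS (fun i => sc.pS i = p) c₀ s] at hb
        rw [my_fiber_sum co.part sc.nrecv (fun l => sc.pL l = p) c₀ f] at hb
        rw [my_fiber_sum co.part sc.nD (fun j => sc.pD j = p) c₀ d] at hb
        rw [my_fiber_sum co.part sc.nsend (fun l => sc.pL l = p) c₀ f] at hb
        have hT : ∑ n ∈ univ.filter (fun n => co.part n = c₀),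
            ∑ t ∈ univ.filter (fun t => sc.nT t = n), sc.gamma t p * ξ t
            = ∑ t ∈ univ.filter (fun t => co.part (sc.nT t) = c₀), sc.gamma t p * ξ t := by
          have := my_fiber_sum (C := C) co.part sc.nT (fun _ : T => True) c₀
            (fun t => sc.gamma t p * ξ t)
          simpa using this
        rw [hT] at hb
        -- split recv sum into local + global
        have hrecv : ∑ l ∈ univ.filter (fun l => co.part (sc.nrecv l) = c₀ ∧ sc.pL l = p), f l
            = (∑ l ∈ univ.filter (fun l => (co.part (sc.nsend l) = co.part (sc.nrecv l))
                ∧ co.part (sc.nrecv l) = c₀ ∧ sc.pL l = p), f l)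
            + ∑ k ∈ univ.filter (fun k => co.cr k = c₀ ∧ co.pK k = p), g k := by
          rw [hgdef, my_sum_agg_recv sc co f c₀ p,
            ← Finset.sum_filter_add_sum_filter_not
              (univ.filter (fun l => co.part (sc.nrecv l) = c₀ ∧ sc.pL l = p))
              (fun l => co.part (sc.nsend l) = co.part (sc.nrecv l))]
          congr 1
          · congr 1; ext l; simp only [Finset.mem_filter, Finset.mem_univ, true_and]; tauto
          · congr 1; ext l; simp only [Finset.mem_filter, Finset.mem_univ, true_and]; tauto
        have hsend : ∑ l ∈ univ.filter (fun l => co.part (sc.nsend l) = c₀ ∧ sc.pL l = p), f l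
            = (∑ l ∈ univ.filter (fun l => (co.part (sc.nsend l) = co.part (sc.nrecv l))
                ∧ co.part (sc.nrecv l) = c₀ ∧ sc.pL l = p), f l)
            + ∑ k ∈ univ.filter (fun k => co.cs k = c₀ ∧ co.pK k = p), g k := by
          rw [hgdef, my_sum_agg_send sc co f c₀ p,
            ← Finset.sum_filter_add_sum_filter_not
              (univ.filter (fun l => co.part (sc.nsend l) = c₀ ∧ sc.pL l = p))
              (fun l => co.part (sc.nsend l) = co.part (sc.nrecv l))]
          congr 1
          · congr 1; ext l
            simp only [Finset.mem_filter, Finset.mem_univ, true_and]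
            constructor
            · rintro ⟨⟨h1, h2⟩, h3⟩; exact ⟨h3, h3.symm.trans h1, h2⟩
            · rintro ⟨h1, h2, h3⟩; exact ⟨⟨h1.trans h2, h3⟩, h1⟩
          · congr 1; ext l; simp only [Finset.mem_filter, Finset.mem_univ, true_and]; tauto
        rw [hrecv, hsend] at hb
        linarith
      · intro k
        constructor
        · exact Finset.sum_nonneg fun l _ => (hf l).1
        · exact Finset.sum_le_sum fun l _ => (hf l).2
    have hle : welfare sc (s, d, f, ξ, y) ≤ coarseWelfare sc co (s, d, g, ξ, y) := by
      unfold welfare coarseWelfare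
      have := my_cost_le sc co f (fun l => (hf l).1)
      simp only [hgdef]
      linarith
    exact hle.trans (le_csSup bdd (Set.mem_image_of_mem _ hmem))
  refine ⟨?_, key⟩
  have hfeas : ((fun _ => 0, fun _ => 0, fun _ => 0, fun _ => 0, fun _ => 0) : Alloc S D L T)
      ∈ Feasible sc := by
    refine ⟨fun n p => by simp, fun j => ⟨le_refl _, sc.dBar_nonneg j⟩,
      fun i => ⟨le_refl _, sc.sBar_nonneg i⟩, fun l => ⟨le_refl _, sc.fBar_nonneg l⟩,
      fun t => ⟨le_refl _, by simp⟩, fun t => ⟨le_refl _, by simp⟩⟩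
  refine csSup_le (Set.Nonempty.image _ ⟨_, hfeas⟩) ?_
  rintro _ ⟨x, hx, rfl⟩
  exact key x hx
end

section
/- The gSC sandwich bound: for every subset of active edges ℒ_a ⊆ ℒ, every partition map c : 𝒩 → 𝒞, and every grouping of the global edges into nonempty classes 𝒦, the sampled and coarse optimal welfares bracket the true optimal welfare: φ̲*(ℒ_a) ≤ φ* ≤ φ̄*. Consequently, the optimality gap of any sampled-feasible allocation x ∈ 𝓕̲(ℒ_a) satisfies φ* − φ(x) ≤ φ̄* − φ(x). -/
open Finset
set_option linter.unusedSectionVars false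

variable {N P S D L T : Type} [Fintype N] [Fintype P] [Fintype S] [Fintype D]
  [Fintype L] [Fintype T] [DecidableEq N] [DecidableEq P]

variable {C K : Type} [Fintype K] [DecidableEq C]

/-! ### Auxiliary lemmas -/

section Aux

/-- Summing fibered sums over the nodes of a partition. -/
lemma fiber_sum {A : Type} [Fintype A] (g : A → N) (part : N → C) (c₀ : C)
    (q : A → Prop) [DecidablePred q] (v : A → ℝ) :
    (∑ n ∈ univ.filter (fun n => part n = c₀),
      ∑ a ∈ univ.filter (fun a => g a = n ∧ q a), v a)
    = ∑ a ∈ univ.filter (fun a => part (g a) = c₀ ∧ q a), v a := by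
  rw [← Finset.sum_fiberwise_of_maps_to (g := g)
      (t := univ.filter fun n => part n = c₀)
      (s := univ.filter fun a => part (g a) = c₀ ∧ q a)
      (fun a ha => by
        simp only [mem_filter, mem_univ, true_and] at ha ⊢; exact ha.1) v]
  refine Finset.sum_congr rfl fun n hn => Finset.sum_congr ?_ fun _ _ => rfl
  simp only [mem_filter, mem_univ, true_and] at hn
  ext a
  simp only [mem_filter, mem_univ, true_and]
  constructor <;> intro h <;> simp_all

/-- Variant of `fiber_sum` with no extra predicate. -/
lemma fiber_sum' {A : Type} [Fintype A] (g : A → N) (part : N → C) (c₀ : C)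
    (v : A → ℝ) :
    (∑ n ∈ univ.filter (fun n => part n = c₀),
      ∑ a ∈ univ.filter (fun a => g a = n), v a)
    = ∑ a ∈ univ.filter (fun a => part (g a) = c₀), v a := by
  rw [← Finset.sum_fiberwise_of_maps_to (g := g)
      (t := univ.filter fun n => part n = c₀)
      (s := univ.filter fun a => part (g a) = c₀)
      (fun a ha => by
        simp only [mem_filter, mem_univ, true_and] at ha ⊢; exact ha) v]
  refine Finset.sum_congr rfl fun n hn => Finset.sum_congr ?_ fun _ _ => rfl
  simp only [mem_filter, mem_univ, true_and] at hn
  ext a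
  simp only [mem_filter, mem_univ, true_and]
  constructor <;> intro h <;> simp_all

variable (sc : SupplyChain N P S D L T) (co : Coarsening sc C K)

lemma classSet_disjoint_s15 {k k' : K} (h : k ≠ k') :
    Disjoint (classSet sc co k) (classSet sc co k') := by
  rw [Finset.disjoint_left]
  intro l hl hl'
  simp only [classSet, mem_filter, mem_univ, true_and] at hl hl'
  have hglob : co.part (sc.nsend l) ≠ co.part (sc.nrecv l) := by
    rw [hl.1, hl.2.1]; exact co.cs_ne_cr k
  obtain ⟨k0, _, huniq⟩ := co.unique_class l hglob
  exact h ((huniq k ⟨hl.1.symm, hl.2.1.symm, hl.2.2.symm⟩).trans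
    (huniq k' ⟨hl'.1.symm, hl'.2.1.symm, hl'.2.2.symm⟩).symm)

lemma biUnion_recv [DecidableEq L] (c₀ : C) (p : P) :
    (univ.filter fun k : K => co.cr k = c₀ ∧ co.pK k = p).biUnion (classSet sc co)
    = univ.filter (fun l => (co.part (sc.nrecv l) = c₀ ∧ sc.pL l = p) ∧
        co.part (sc.nsend l) ≠ co.part (sc.nrecv l)) := by
  ext l
  simp only [mem_biUnion, mem_filter, mem_univ, true_and, classSet]
  constructor
  · rintro ⟨k, ⟨hcr, hp⟩, hs, hr, hpl⟩
    exact ⟨⟨hr.trans hcr, hpl.trans hp⟩, by rw [hs, hr]; exact co.cs_ne_cr k⟩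
  · rintro ⟨⟨hr, hp⟩, hglob⟩
    obtain ⟨k, ⟨h1, h2, h3⟩, -⟩ := co.unique_class l hglob
    exact ⟨k, ⟨h2.symm ▸ hr, h3.symm ▸ hp⟩, h1.symm, h2.symm, h3.symm⟩

lemma biUnion_send [DecidableEq L] (c₀ : C) (p : P) :
    (univ.filter fun k : K => co.cs k = c₀ ∧ co.pK k = p).biUnion (classSet sc co)
    = univ.filter (fun l => (co.part (sc.nsend l) = c₀ ∧ sc.pL l = p) ∧
        co.part (sc.nsend l) ≠ co.part (sc.nrecv l)) := by
  ext l
  simp only [mem_biUnion, mem_filter, mem_univ, true_and, classSet]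
  constructor
  · rintro ⟨k, ⟨hcs, hp⟩, hs, hr, hpl⟩
    exact ⟨⟨hs.trans hcs, hpl.trans hp⟩, by rw [hs, hr]; exact co.cs_ne_cr k⟩
  · rintro ⟨⟨hs, hp⟩, hglob⟩
    obtain ⟨k, ⟨h1, h2, h3⟩, -⟩ := co.unique_class l hglob
    exact ⟨k, ⟨h1.symm ▸ hs, h3.symm ▸ hp⟩, h1.symm, h2.symm, h3.symm⟩

lemma sum_classes_recv [DecidableEq L] (v : L → ℝ) (c₀ : C) (p : P) :
    (∑ k ∈ univ.filter (fun k => co.cr k = c₀ ∧ co.pK k = p), aggFlow sc co v k)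
    = ∑ l ∈ univ.filter (fun l => (co.part (sc.nrecv l) = c₀ ∧ sc.pL l = p) ∧
        co.part (sc.nsend l) ≠ co.part (sc.nrecv l)), v l := by
  rw [← biUnion_recv sc co c₀ p,
    Finset.sum_biUnion (fun k _ k' _ hkk' => classSet_disjoint_s15 sc co hkk')]
  rfl

lemma sum_classes_send [DecidableEq L] (v : L → ℝ) (c₀ : C) (p : P) :
    (∑ k ∈ univ.filter (fun k => co.cs k = c₀ ∧ co.pK k = p), aggFlow sc co v k)
    = ∑ l ∈ univ.filter (fun l => (co.part (sc.nsend l) = c₀ ∧ sc.pL l = p) ∧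
        co.part (sc.nsend l) ≠ co.part (sc.nrecv l)), v l := by
  rw [← biUnion_send sc co c₀ p,
    Finset.sum_biUnion (fun k _ k' _ hkk' => classSet_disjoint_s15 sc co hkk')]
  rfl

lemma aggCost_le {k : K} {l : L} (hl : l ∈ classSet sc co k) :
    aggCost sc co k ≤ sc.alphaF l :=
  csInf_le (((classSet sc co k).finite_toSet.image _).bddBelow)
    ⟨l, by simpa using hl, rfl⟩

lemma aggCost_nonneg {k : K} (hne : (classSet sc co k).Nonempty) :
    0 ≤ aggCost sc co k := by
  obtain ⟨l, hl⟩ := hne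
  refine le_csInf ⟨_, ⟨l, by simpa using hl, rfl⟩⟩ ?_
  rintro b ⟨l', -, rfl⟩
  exact sc.alphaF_nonneg l'

/-- The natural map from fine allocations to coarse allocations. -/
def toCoarse (x : Alloc S D L T) : CoarseAlloc S D K T :=
  (x.1, x.2.1, aggFlow sc co x.2.2.1, x.2.2.2.1, x.2.2.2.2)

lemma toCoarse_feasible {x : Alloc S D L T} (hx : x ∈ Feasible sc) :
    toCoarse sc co x ∈ CoarseFeasible sc co := by
  classical
  obtain ⟨hbal, hd, hs, hf, hy, hxi⟩ := hx
  refine ⟨fun c₀ p => ?_, hd, hs, fun k => ?_, hy, hxi⟩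
  · -- coarse balance
    have h0 : ∑ n ∈ univ.filter (fun n => co.part n = c₀),
        ((∑ i ∈ univ.filter (fun i => sc.nS i = n ∧ sc.pS i = p), x.1 i)
        + (∑ l ∈ univ.filter (fun l => sc.nrecv l = n ∧ sc.pL l = p), x.2.2.1 l)
        - (∑ j ∈ univ.filter (fun j => sc.nD j = n ∧ sc.pD j = p), x.2.1 j)
        - (∑ l ∈ univ.filter (fun l => sc.nsend l = n ∧ sc.pL l = p), x.2.2.1 l)
        + (∑ t ∈ univ.filter (fun t => sc.nT t = n), sc.gamma t p * x.2.2.2.1 t)) = 0 :=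
      Finset.sum_eq_zero fun n _ => hbal n p
    rw [Finset.sum_add_distrib, Finset.sum_sub_distrib, Finset.sum_sub_distrib,
      Finset.sum_add_distrib, fiber_sum, fiber_sum, fiber_sum, fiber_sum, fiber_sum'] at h0
    -- split recv flows into global and local
    have hin := Finset.sum_filter_add_sum_filter_not
      (univ.filter fun l => co.part (sc.nrecv l) = c₀ ∧ sc.pL l = p)
      (fun l => co.part (sc.nsend l) ≠ co.part (sc.nrecv l)) x.2.2.1
    have hout := Finset.sum_filter_add_sum_filter_not
      (univ.filter fun l => co.part (sc.nsend l) = c₀ ∧ sc.pL l = p)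
      (fun l => co.part (sc.nsend l) ≠ co.part (sc.nrecv l)) x.2.2.1
    rw [Finset.filter_filter, Finset.filter_filter] at hin hout
    -- local parts coincide
    have hloc : (univ.filter fun l => (co.part (sc.nrecv l) = c₀ ∧ sc.pL l = p) ∧
          ¬co.part (sc.nsend l) ≠ co.part (sc.nrecv l))
        = univ.filter fun l => (co.part (sc.nsend l) = c₀ ∧ sc.pL l = p) ∧
          ¬co.part (sc.nsend l) ≠ co.part (sc.nrecv l) := by
      ext l
      simp only [mem_filter, mem_univ, true_and, not_ne_iff]
      constructor
      · rintro ⟨⟨h1, h2⟩, h3⟩; exact ⟨⟨h3.trans h1, h2⟩, h3⟩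
      · rintro ⟨⟨h1, h2⟩, h3⟩; exact ⟨⟨h3 ▸ h1, h2⟩, h3⟩
    show _ + (∑ k ∈ univ.filter (fun k => co.cr k = c₀ ∧ co.pK k = p),
        aggFlow sc co x.2.2.1 k) - _ - (∑ k ∈ univ.filter (fun k => co.cs k = c₀ ∧ co.pK k = p),
        aggFlow sc co x.2.2.1 k) + _ = 0
    rw [sum_classes_recv, sum_classes_send]
    rw [hloc] at hin
    simp only [toCoarse]
    linarith [hin, hout, h0]
  · -- class-flow bounds
    exact ⟨Finset.sum_nonneg fun l _ => (hf l).1,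
      Finset.sum_le_sum fun l _ => (hf l).2⟩

lemma welfare_le_coarse (hne : ∀ k : K, (classSet sc co k).Nonempty)
    {x : Alloc S D L T} (hx : x ∈ Feasible sc) :
    welfare sc x ≤ coarseWelfare sc co (toCoarse sc co x) := by
  classical
  have hf := hx.2.2.2.1
  have key : (∑ k, aggCost sc co k * aggFlow sc co x.2.2.1 k)
      ≤ ∑ l, sc.alphaF l * x.2.2.1 l := by
    calc (∑ k, aggCost sc co k * aggFlow sc co x.2.2.1 k)
        = ∑ k, ∑ l ∈ classSet sc co k, aggCost sc co k * x.2.2.1 l := by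
          simp [aggFlow, Finset.mul_sum]
      _ ≤ ∑ k, ∑ l ∈ classSet sc co k, sc.alphaF l * x.2.2.1 l :=
          Finset.sum_le_sum fun k _ => Finset.sum_le_sum fun l hl =>
            mul_le_mul_of_nonneg_right (aggCost_le sc co hl) (hf l).1
      _ = ∑ l ∈ univ.biUnion (classSet sc co), sc.alphaF l * x.2.2.1 l :=
          (Finset.sum_biUnion
            (fun k _ k' _ hkk' => classSet_disjoint_s15 sc co hkk')).symm
      _ ≤ ∑ l, sc.alphaF l * x.2.2.1 l :=
          Finset.sum_le_sum_of_subset_of_nonneg (Finset.subset_univ _)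
            (fun l _ _ => mul_nonneg (sc.alphaF_nonneg l) (hf l).1)
  unfold welfare coarseWelfare toCoarse
  simp only
  linarith

lemma zero_sampled (La : Set L) :
    ((fun _ => 0, fun _ => 0, fun _ => 0, fun _ => 0, fun _ => 0) : Alloc S D L T)
      ∈ SampledFeasible sc La := by
  refine ⟨⟨fun n p => by simp, fun j => ⟨le_refl _, sc.dBar_nonneg j⟩,
    fun i => ⟨le_refl _, sc.sBar_nonneg i⟩, fun l => ⟨le_refl _, sc.fBar_nonneg l⟩,
    fun t => ⟨le_refl _, Int.ofNat_nonneg _⟩, fun t => ⟨le_refl _, by simp⟩⟩,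
    fun l _ => rfl⟩

lemma welfare_bdd :
    ∀ y ∈ welfare sc '' Feasible sc, y ≤ ∑ j, sc.alphaD j * sc.dBar j := by
  rintro y ⟨x, ⟨hbal, hd, hs, hf, hy, hxi⟩, rfl⟩
  have h1 : ∑ j, sc.alphaD j * x.2.1 j ≤ ∑ j, sc.alphaD j * sc.dBar j :=
    Finset.sum_le_sum fun j _ =>
      mul_le_mul_of_nonneg_left (hd j).2 (sc.alphaD_nonneg j)
  have h2 : 0 ≤ ∑ i, sc.alphaS i * x.1 i :=
    Finset.sum_nonneg fun i _ => mul_nonneg (sc.alphaS_nonneg i) (hs i).1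
  have h3 : 0 ≤ ∑ l, sc.alphaF l * x.2.2.1 l :=
    Finset.sum_nonneg fun l _ => mul_nonneg (sc.alphaF_nonneg l) (hf l).1
  have h4 : 0 ≤ ∑ t, sc.alphaXi t * x.2.2.2.1 t :=
    Finset.sum_nonneg fun t _ => mul_nonneg (sc.alphaXi_nonneg t) (hxi t).1
  have h5 : 0 ≤ ∑ t, sc.alphaY t * (x.2.2.2.2 t : ℝ) :=
    Finset.sum_nonneg fun t _ => mul_nonneg (sc.alphaY_nonneg t)
      (by exact_mod_cast (hy t).1)
  unfold welfare
  linarith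

lemma coarse_bdd (hne : ∀ k : K, (classSet sc co k).Nonempty) :
    ∀ y ∈ coarseWelfare sc co '' CoarseFeasible sc co,
      y ≤ ∑ j, sc.alphaD j * sc.dBar j := by
  rintro y ⟨x, ⟨hbal, hd, hs, hg, hy, hxi⟩, rfl⟩
  have h1 : ∑ j, sc.alphaD j * x.2.1 j ≤ ∑ j, sc.alphaD j * sc.dBar j :=
    Finset.sum_le_sum fun j _ =>
      mul_le_mul_of_nonneg_left (hd j).2 (sc.alphaD_nonneg j)
  have h2 : 0 ≤ ∑ i, sc.alphaS i * x.1 i :=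
    Finset.sum_nonneg fun i _ => mul_nonneg (sc.alphaS_nonneg i) (hs i).1
  have h3 : 0 ≤ ∑ k, aggCost sc co k * x.2.2.1 k :=
    Finset.sum_nonneg fun k _ => mul_nonneg (aggCost_nonneg sc co (hne k)) (hg k).1
  have h4 : 0 ≤ ∑ t, sc.alphaXi t * x.2.2.2.1 t :=
    Finset.sum_nonneg fun t _ => mul_nonneg (sc.alphaXi_nonneg t) (hxi t).1
  have h5 : 0 ≤ ∑ t, sc.alphaY t * (x.2.2.2.2 t : ℝ) :=
    Finset.sum_nonneg fun t _ => mul_nonneg (sc.alphaY_nonneg t)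
      (by exact_mod_cast (hy t).1)
  unfold coarseWelfare
  linarith

end Aux

/-- The gSC sandwich bound: for every subset of active edges
`ℒ_a ⊆ ℒ`, every partition map and every grouping of the global edges into nonempty
classes, the sampled and coarse optimal welfares bracket the true optimal welfare:
`φ̲*(ℒ_a) ≤ φ* ≤ φ̄*`; consequently, the optimality gap of any sampled-feasible
allocation `x ∈ 𝓕̲(ℒ_a)` satisfies `φ* − φ(x) ≤ φ̄* − φ(x)`. -/
theorem gSC_sandwich (sc : SupplyChain N P S D L T) (La : Set L)
    (co : Coarsening sc C K) (hne : ∀ k, (classSet sc co k).Nonempty) :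
    phiLower sc La ≤ phiStar sc
      ∧ phiStar sc ≤ phiUpper sc co
      ∧ ∀ x ∈ SampledFeasible sc La,
          phiStar sc - welfare sc x ≤ phiUpper sc co - welfare sc x := by
  have hzero := zero_sampled sc La
  have hSne : (welfare sc '' SampledFeasible sc La).Nonempty :=
    ⟨_, Set.mem_image_of_mem _ hzero⟩
  have hFne : (welfare sc '' Feasible sc).Nonempty :=
    ⟨_, Set.mem_image_of_mem _ hzero.1⟩
  have hFbdd : BddAbove (welfare sc '' Feasible sc) :=
    ⟨_, fun y hy => welfare_bdd sc y hy⟩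
  have hCbdd : BddAbove (coarseWelfare sc co '' CoarseFeasible sc co) :=
    ⟨_, fun y hy => coarse_bdd sc co hne y hy⟩
  have h1 : phiLower sc La ≤ phiStar sc :=
    csSup_le_csSup hFbdd hSne
      (Set.image_mono fun x hx => hx.1)
  have h2 : phiStar sc ≤ phiUpper sc co := by
    refine csSup_le hFne ?_
    rintro y ⟨x, hx, rfl⟩
    refine le_trans (welfare_le_coarse sc co hne hx) ?_
    exact le_csSup hCbdd ⟨_, toCoarse_feasible sc co hx, rfl⟩
  exact ⟨h1, h2, fun x _ => sub_le_sub_right h2 _⟩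
end
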